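/- arXiv:1804.02802 — 7 statements merged into one kernel-verified Lean document; each statement's English description precedes it below -/
import Mathlib

section
/- Let G be a finite connected simple graph satisfying property (P3) with witness S. Then for every c ∈ S and x ∈ V(G) with d(c,x) ≥ 2, the set C(c,x) is nonempty. -/
open SimpleGraph

/-- The closed neighborhood `N[v]` of a vertex. -/
def cNbr {V : Type} (G : SimpleGraph V) (v : V) : Set V := insert v (G.neighborSet v)

/-- `N(c,x)`: the neighbors of `c` lying on a shortest path from `c` to `x`. -/
def stepSet {V : Type} (G : SimpleGraph V) (c x : V) : Set V :=
  {v | G.Adj c v ∧ G.dist c x = 1 + G.dist v x}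

/-- Property (P1): the four-point condition. -/
def P1 {V : Type} (G : SimpleGraph V) : Prop :=
  ∀ c c' x y : V,
    (G.dist c c' + G.dist x y ≤ G.dist c x + G.dist c' y ∧
      G.dist c x + G.dist c' y = G.dist c y + G.dist c' x) ∨
    (G.dist c x + G.dist c' y ≤ G.dist c c' + G.dist x y ∧
      G.dist c c' + G.dist x y = G.dist c y + G.dist c' x) ∨
    (G.dist c y + G.dist c' x ≤ G.dist c c' + G.dist x y ∧
      G.dist c c' + G.dist x y = G.dist c x + G.dist c' y)

/-- Property (P2). -/
def P2 {V : Type} (G : SimpleGraph V) : Prop :=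
  ∀ c x : V, 2 ≤ G.dist c x → ∀ c' ∈ stepSet G c x, ∀ y : V, 2 ≤ G.dist c' y →
    G.dist c y = G.dist c c' + G.dist c' y ∨ G.dist x y = G.dist x c' + G.dist c' y

/-- A (P3)-witness for `G`. -/
def P3Witness {V : Type} (G : SimpleGraph V) (S : Set V) : Prop :=
  (∀ v : V, v ∈ S ∨ ∃ s ∈ S, G.Adj v s) ∧
  ∀ c ∈ S, ∀ x : V, 2 ≤ G.dist c x →
    ∃ c' ∈ stepSet G c x ∩ S, ∀ y : V, 2 ≤ G.dist c' y →
      G.dist c y = G.dist c c' + G.dist c' y ∨ G.dist x y = G.dist x c' + G.dist c' y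

/-- Property (P3). -/
def P3 {V : Type} (G : SimpleGraph V) : Prop := ∃ S : Set V, P3Witness G S

/-- `C(c,x)` relative to a set `S`. -/
def CSet {V : Type} (G : SimpleGraph V) (S : Set V) (c x : V) : Set V :=
  {u | u ∈ stepSet G c x ∩ S ∧ ∀ v ∈ stepSet G c x, cNbr G v ⊆ cNbr G u}

/-- A cut vertex of a connected graph: its removal disconnects the graph. -/
def IsCutVertex {V : Type} (G : SimpleGraph V) (v : V) : Prop :=
  G.Connected ∧ ¬ (G.induce {u | u ≠ v}).Connected

/-- A set of vertices inducing a connected subgraph with no cut vertex of its own. -/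
def NoCutSet {V : Type} (G : SimpleGraph V) (B : Set V) : Prop :=
  (G.induce B).Connected ∧ ∀ v : B, ¬ IsCutVertex (G.induce B) v

/-- A block of `G`: a maximal connected subgraph having no cut vertex of its own. -/
def IsBlock {V : Type} (G : SimpleGraph V) (B : Set V) : Prop :=
  NoCutSet G B ∧ ∀ B' : Set V, B ⊆ B' → NoCutSet G B' → B = B'

/-- A block graph: a connected graph in which every block is complete. -/
def IsBlockGraph {V : Type} (G : SimpleGraph V) : Prop :=
  G.Connected ∧ ∀ B : Set V, IsBlock G B → ∀ u v, u ∈ B → v ∈ B → u ≠ v → G.Adj u v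

/-- The blow-up of a graph `H` by multiplicities `n`. -/
def blowup {W : Type} (H : SimpleGraph W) (n : W → ℕ) :
    SimpleGraph {p : W × ℕ // p.2 < n p.1} where
  Adj p q := p.val ≠ q.val ∧ (p.val.1 = q.val.1 ∨ H.Adj p.val.1 q.val.1)
  symm := by
    constructor
    rintro p q ⟨h1, h2 | h2⟩
    · exact ⟨fun h => h1 h.symm, Or.inl h2.symm⟩
    · exact ⟨fun h => h1 h.symm, Or.inr h2.symm⟩
  loopless := by constructor; rintro p ⟨h1, -⟩; exact h1 rfl

/-- An extended block graph: a graph isomorphic to the blow-up of the cut vertices of a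
finite block graph. -/
def IsExtendedBlockGraph {V : Type} (G : SimpleGraph V) : Prop :=
  ∃ (W : Type) (_ : Finite W) (H : SimpleGraph W) (n : W → ℕ),
    IsBlockGraph H ∧ (∀ v, 1 ≤ n v) ∧ (∀ v, ¬ IsCutVertex H v → n v = 1) ∧
    Nonempty (G ≃g blowup H n)

/-- `B` is a backbone of `G`. -/
def IsBackbone {V : Type} (G : SimpleGraph V) (B : Set V) : Prop :=
  IsExtendedBlockGraph (G.induce B) ∧
  ∀ c ∈ B, ∀ x : V, 2 ≤ G.dist c x →
    ∃ c' ∈ stepSet G c x ∩ B, ∀ v ∈ stepSet G c x, cNbr G v ⊆ cNbr G c'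

/-- A vertebrate graph: a connected graph with a backbone. -/
def IsVertebrateGraph {V : Type} (G : SimpleGraph V) : Prop :=
  G.Connected ∧ ∃ B : Set V, IsBackbone G B

/-- Under (P3) with witness `S`, the set `C(c,x)` is nonempty. -/
theorem CSet_nonempty {V : Type} [Fintype V] (G : SimpleGraph V)
    (hG : G.Connected) (S : Set V) (hS : P3Witness G S) :
    ∀ c ∈ S, ∀ x : V, 2 ≤ G.dist c x → (CSet G S c x).Nonempty := by
  intro c hc x hdx
  obtain ⟨c', ⟨hstep, hc'S⟩, hP⟩ := hS.2 c hc x hdx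
  refine ⟨c', ⟨⟨hstep, hc'S⟩, ?_⟩⟩
  rintro v ⟨hadj_v, hdv⟩ w hw
  -- hw : w ∈ cNbr G v, show w ∈ cNbr G c'
  have hvw : G.dist v w ≤ 1 := by
    rcases hw with h | h
    · subst h; rw [SimpleGraph.dist_self]; omega
    · exact le_of_eq ((SimpleGraph.dist_eq_one_iff_adj).2 h)
  by_contra hne
  have hcw2 : 2 ≤ G.dist c' w := by
    rcases Nat.lt_or_ge (G.dist c' w) 2 with h | h
    · interval_cases h' : G.dist c' w
      · have : G.Reachable c' w := hG.preconnected c' w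
        have := (SimpleGraph.Reachable.dist_eq_zero_iff this).1 h'
        exact absurd (Or.inl this.symm) hne
      · exact absurd (Or.inr ((SimpleGraph.dist_eq_one_iff_adj).1 h')) hne
    · exact h
  have hcc' : G.dist c c' = 1 := (SimpleGraph.dist_eq_one_iff_adj).2 hstep.1
  have hcv : G.dist c v = 1 := (SimpleGraph.dist_eq_one_iff_adj).2 hadj_v
  rcases hP w hcw2 with h | h
  · -- d(c,w) = 1 + d(c',w) ≥ 3 but d(c,w) ≤ 2
    have h1 : G.dist c w ≤ 2 := by
      calc G.dist c w ≤ G.dist c v + G.dist v w := hG.dist_triangle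
        _ ≤ 1 + 1 := by omega
    omega
  · -- d(x,w) = d(x,c') + d(c',w)
    have hs2 : G.dist c x = 1 + G.dist c' x := hstep.2
    have hxc' : G.dist x c' + 1 = G.dist c x := by
      rw [show G.dist x c' = G.dist c' x from SimpleGraph.dist_comm]; omega
    have hxv : G.dist x v + 1 = G.dist c x := by
      rw [show G.dist x v = G.dist v x from SimpleGraph.dist_comm]; omega
    have h1 : G.dist x w ≤ G.dist x v + G.dist v w := hG.dist_triangle
    omega
end

section
/- Let G be a finite connected simple graph satisfying property (P2). Then for all vertices c, x with d(c,x) ≥ 2 and all c1, c2 ∈ N(c,x), we have N[c1] = N[c2]. -/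
open SimpleGraph

lemma mem_cNbr_of_mem_stepSet {V : Type} [Fintype V] (G : SimpleGraph V)
    (hG : G.Connected) (hP2 : P2 G) (c x : V) (hdx : 2 ≤ G.dist c x)
    (c1 c2 : V) (h1 : c1 ∈ stepSet G c x) (h2 : c2 ∈ stepSet G c x) :
    c1 ∈ cNbr G c2 := by
  obtain ⟨ha1, hd1⟩ := h1
  obtain ⟨ha2, hd2⟩ := h2
  by_cases heq : c1 = c2
  · exact Or.inl heq
  by_cases hadj : G.Adj c2 c1
  · exact Or.inr hadj
  have hd12 : G.dist c1 c2 = 2 := by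
    have hle : G.dist c1 c2 ≤ 2 := by
      calc G.dist c1 c2 ≤ G.dist c1 c + G.dist c c2 := hG.dist_triangle
      _ ≤ 1 + 1 := by
          gcongr
          · exact le_of_eq (dist_eq_one_iff_adj.mpr ha1.symm)
          · exact le_of_eq (dist_eq_one_iff_adj.mpr ha2)
    have h0 : G.dist c1 c2 ≠ 0 := fun h => heq (hG.dist_eq_zero_iff.mp h)
    have h1' : G.dist c1 c2 ≠ 1 := fun h => hadj (dist_eq_one_iff_adj.mp h).symm
    omega
  rcases hP2 c x hdx c1 ⟨ha1, hd1⟩ c2 (by omega) with h | h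
  · have : G.dist c c1 = 1 := dist_eq_one_iff_adj.mpr ha1
    have : G.dist c c2 = 1 := dist_eq_one_iff_adj.mpr ha2
    omega
  · have hx1 : G.dist x c1 = G.dist c1 x := G.dist_comm
    have hx2 : G.dist x c2 = G.dist c2 x := G.dist_comm
    omega

/-- Under (P2), any two members of `N(c,x)` have the same closed
neighborhood. -/
theorem cNbr_eq_of_mem_stepSet {V : Type} [Fintype V] (G : SimpleGraph V)
    (hG : G.Connected) (hP2 : P2 G) :
    ∀ c x : V, 2 ≤ G.dist c x →
      ∀ c1 ∈ stepSet G c x, ∀ c2 ∈ stepSet G c x, cNbr G c1 = cNbr G c2 := by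
  intro c x hdx c1 h1 c2 h2
  have key : ∀ d1 ∈ stepSet G c x, ∀ d2 ∈ stepSet G c x, cNbr G d1 ⊆ cNbr G d2 := by
    intro d1 hd1 d2 hd2 v hv
    by_cases hvc2 : v = d2
    · exact Or.inl hvc2
    by_cases hadj2 : G.Adj d2 v
    · exact Or.inr hadj2
    rcases hv with hv | hv
    · exact absurd (mem_cNbr_of_mem_stepSet G hG hP2 c x hdx d1 d2 hd1 hd2)
        (by rw [← hv]; rintro (h | h); exact hvc2 h; exact hadj2 h)
    · -- v adjacent to d1
      have hav : G.Adj d1 v := hv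
      rcases mem_cNbr_of_mem_stepSet G hG hP2 c x hdx d1 d2 hd1 hd2 with he | ha12
      · exact absurd (he ▸ hav) hadj2
      have hd2v : G.dist d2 v = 2 := by
        have hle : G.dist d2 v ≤ 2 := by
          calc G.dist d2 v ≤ G.dist d2 d1 + G.dist d1 v := hG.dist_triangle
          _ ≤ 1 + 1 := by
              gcongr
              · exact le_of_eq (dist_eq_one_iff_adj.mpr ha12)
              · exact le_of_eq (dist_eq_one_iff_adj.mpr hav)
        have h0 : G.dist d2 v ≠ 0 := fun h => hvc2 (hG.dist_eq_zero_iff.mp h).symm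
        have h1' : G.dist d2 v ≠ 1 := fun h => hadj2 (dist_eq_one_iff_adj.mp h)
        omega
      obtain ⟨ha1, hD1⟩ := hd1
      obtain ⟨ha2, hD2⟩ := hd2
      rcases hP2 c x hdx d2 ⟨ha2, hD2⟩ v (by omega) with h | h
      · have hc2 : G.dist c d2 = 1 := dist_eq_one_iff_adj.mpr ha2
        have hcv : G.dist c v ≤ 2 := by
          calc G.dist c v ≤ G.dist c d1 + G.dist d1 v := hG.dist_triangle
          _ ≤ 1 + 1 := by
              gcongr
              · exact le_of_eq (dist_eq_one_iff_adj.mpr ha1)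
              · exact le_of_eq (dist_eq_one_iff_adj.mpr hav)
        omega
      · have hxv : G.dist x v ≤ G.dist c x - 1 + 1 := by
          calc G.dist x v ≤ G.dist x d1 + G.dist d1 v := hG.dist_triangle
          _ ≤ G.dist c x - 1 + 1 := by
              gcongr
              · rw [G.dist_comm]; omega
              · exact le_of_eq (dist_eq_one_iff_adj.mpr hav)
        have hxc2 : G.dist x d2 = G.dist c x - 1 := by rw [G.dist_comm]; omega
        omega
  exact Set.Subset.antisymm (key c1 h1 c2 h2) (key c2 h2 c1 h1)
end

section
/- Let G be a finite connected simple graph satisfying property (P3) with witness S. Let c1, c2 ∈ V(G) with c2 ∈ S and N[c1] ⊆ N[c2]. If c1 ∈ C(c,x) for some c ∈ S and x ∈ V(G) with d(c,x) ≥ 2, then c2 ∈ C(c,x). -/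
open SimpleGraph

lemma exists_adj_dist_succ {V : Type} (G : SimpleGraph V) (hG : G.Connected) {u x : V}
    (h : 1 ≤ G.dist u x) : ∃ w, G.Adj u w ∧ G.dist u x = G.dist w x + 1 := by
  obtain ⟨p, hp⟩ := hG.exists_walk_length_eq_dist u x
  cases p with
  | nil => simp at h
  | cons hadj q =>
    rename_i w
    have h1 : G.dist w x ≤ q.length := G.dist_le q
    have h2 : q.length + 1 = G.dist u x := by simpa using hp
    have h3 : G.dist u x ≤ G.dist u w + G.dist w x := hG.dist_triangle
    have h4 : G.dist u w = 1 := SimpleGraph.dist_eq_one_iff_adj.mpr hadj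
    exact ⟨w, hadj, by omega⟩

/-- Under (P3) with witness `S`, if `N[c1] ⊆ N[c2]`, `c2 ∈ S` and
`c1 ∈ C(c,x)`, then `c2 ∈ C(c,x)`. -/
theorem mem_CSet_of_cNbr_subset {V : Type} [Fintype V] (G : SimpleGraph V)
    (hG : G.Connected) (S : Set V) (hS : P3Witness G S)
    (c1 c2 : V) (hc2 : c2 ∈ S) (h12 : cNbr G c1 ⊆ cNbr G c2)
    (c : V) (hc : c ∈ S) (x : V) (hcx : 2 ≤ G.dist c x)
    (h1 : c1 ∈ CSet G S c x) : c2 ∈ CSet G S c x := by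
  obtain ⟨⟨⟨hadj1, hd1⟩, hc1S⟩, hdom⟩ := h1
  have hd1x : 1 ≤ G.dist c1 x := by omega
  obtain ⟨w, hw, hwd⟩ := exists_adj_dist_succ G hG hd1x
  have hwN : w ∈ cNbr G c2 := h12 (Or.inr hw)
  have h2w : G.dist c2 w ≤ 1 := by
    rcases Set.mem_insert_iff.mp hwN with h | h
    · rw [h, SimpleGraph.dist_self]; omega
    · exact le_of_eq (SimpleGraph.dist_eq_one_iff_adj.mpr h)
  have htri : G.dist c2 x ≤ G.dist c2 w + G.dist w x := hG.dist_triangle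
  have hle : G.dist c2 x ≤ G.dist c1 x := by omega
  have hne : c2 ≠ c := by
    rintro rfl
    omega
  have hadj2 : G.Adj c c2 := by
    have hcN : c ∈ cNbr G c2 := h12 (Or.inr hadj1.symm)
    rcases Set.mem_insert_iff.mp hcN with h | h
    · exact absurd h.symm hne
    · exact h.symm
  have hd2 : G.dist c x = 1 + G.dist c2 x := by
    have htri2 : G.dist c x ≤ G.dist c c2 + G.dist c2 x := hG.dist_triangle
    have h1' : G.dist c c2 = 1 := SimpleGraph.dist_eq_one_iff_adj.mpr hadj2
    omega
  exact ⟨⟨⟨hadj2, hd2⟩, hc2⟩, fun v hv => (hdom v hv).trans h12⟩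
end

section
/- Let G be a finite connected simple graph satisfying property (P3) with witness S. For any c1, c2 ∈ S and x1, x2 ∈ V(G) with d(c1,x1) ≥ 2 and d(c2,x2) ≥ 2, the sets C(c1,x1) and C(c2,x2) are either identical or disjoint. -/
open SimpleGraph

lemma cNbr_dist_le_aux {V : Type} {G : SimpleGraph V} (hG : G.Connected) {u u' : V}
    (h : cNbr G u = cNbr G u') {y : V} (hy : y ≠ u') : G.dist u y ≤ G.dist u' y := by
  obtain ⟨p, hp⟩ := (hG u' y).exists_walk_length_eq_dist
  cases p with
  | nil => exact absurd rfl hy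
  | @cons _ w _ ha q =>
    have hw : w ∈ cNbr G u' := Set.mem_insert_of_mem _ ha
    rw [← h] at hw
    have huw : G.dist u w ≤ 1 := by
      rcases hw with rfl | hw
      · rw [SimpleGraph.dist_self]; omega
      · exact le_of_eq ((G.dist_eq_one_iff_adj).2 hw)
    calc G.dist u y ≤ G.dist u w + G.dist w y := hG.dist_triangle
      _ ≤ 1 + q.length := by
          have := SimpleGraph.dist_le q
          omega
      _ = (SimpleGraph.Walk.cons ha q).length := by
          rw [SimpleGraph.Walk.length_cons]; omega
      _ = G.dist u' y := hp

lemma cNbr_dist_eq_aux {V : Type} {G : SimpleGraph V} (hG : G.Connected) {u u' : V}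
    (h : cNbr G u = cNbr G u') {y : V} (hy : y ≠ u') (hy' : y ≠ u) :
    G.dist u y = G.dist u' y :=
  le_antisymm (cNbr_dist_le_aux hG h hy) (cNbr_dist_le_aux hG h.symm hy')

lemma CSet_push {V : Type} {G : SimpleGraph V} (hG : G.Connected) {S : Set V}
    {c1 c2 x1 x2 u u1 : V} (h2 : 2 ≤ G.dist c2 x2)
    (hu1 : u ∈ CSet G S c1 x1) (hu2 : u ∈ CSet G S c2 x2)
    (h1mem : u1 ∈ CSet G S c1 x1) : u1 ∈ CSet G S c2 x2 := by
  obtain ⟨⟨⟨huadj1, hudist1⟩, huS⟩, hudom1⟩ := hu1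
  obtain ⟨⟨⟨huadj2, hudist2⟩, _⟩, hudom2⟩ := hu2
  obtain ⟨⟨⟨h1adj, h1dist⟩, h1S⟩, h1dom⟩ := h1mem
  have heq : cNbr G u = cNbr G u1 := by
    apply Set.Subset.antisymm
    · exact h1dom u ⟨huadj1, hudist1⟩
    · exact hudom1 u1 ⟨h1adj, h1dist⟩
  have hc2mem : c2 ∈ cNbr G u1 := by
    rw [← heq]; exact Set.mem_insert_of_mem _ huadj2.symm
  have hx2u : x2 ≠ u := by
    rintro rfl
    rw [SimpleGraph.dist_self] at hudist2
    omega
  have hx2u1 : x2 ≠ u1 := by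
    rintro rfl
    rcases hc2mem with rfl | hadj
    · simp [SimpleGraph.dist_self] at h2
    · have : G.dist c2 x2 = 1 := (G.dist_eq_one_iff_adj).2 hadj.symm
      omega
  have hdeq : G.dist u x2 = G.dist u1 x2 :=
    cNbr_dist_eq_aux hG heq hx2u1 hx2u
  have hc2u1 : c2 ≠ u1 := by
    rintro rfl
    rw [hdeq] at hudist2
    omega
  have hadj : G.Adj c2 u1 := by
    rcases hc2mem with h | h
    · exact absurd h hc2u1
    · exact h.symm
  refine ⟨⟨⟨hadj, by rw [hudist2, hdeq]⟩, h1S⟩, fun v hv => ?_⟩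
  rw [← heq]
  exact hudom2 v hv

/-- Under (P3) with witness `S`, the sets `C(c1,x1)` and `C(c2,x2)` are
either identical or disjoint. -/
theorem CSet_eq_or_disjoint {V : Type} [Fintype V] (G : SimpleGraph V)
    (hG : G.Connected) (S : Set V) (hS : P3Witness G S)
    (c1 c2 : V) (hc1 : c1 ∈ S) (hc2 : c2 ∈ S) (x1 x2 : V)
    (h1 : 2 ≤ G.dist c1 x1) (h2 : 2 ≤ G.dist c2 x2) :
    CSet G S c1 x1 = CSet G S c2 x2 ∨ Disjoint (CSet G S c1 x1) (CSet G S c2 x2) := by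
  by_cases hd : Disjoint (CSet G S c1 x1) (CSet G S c2 x2)
  · exact Or.inr hd
  · left
    rw [Set.not_disjoint_iff] at hd
    obtain ⟨u, hu1, hu2⟩ := hd
    ext w
    constructor
    · exact fun hw => CSet_push hG h2 hu1 hu2 hw
    · exact fun hw => CSet_push hG h1 hu2 hu1 hw
end

section
/- Let G be a vertebrate graph with backbone B. Then for all vertices u, v ∈ V(G) with d(u,v) ≥ 2, there exists a shortest path in G from u to v all of whose internal vertices lie in B. -/
open SimpleGraph

section Aux

variable {V : Type} (G : SimpleGraph V)

lemma adj_of_stepSet {c x w : V} (h : w ∈ stepSet G c x) : G.Adj c w := h.1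

lemma exists_mem_stepSet (hG : G.Connected) {u v : V} (h : 1 ≤ G.dist u v) :
    ∃ w, w ∈ stepSet G u v := by
  obtain ⟨p, hp⟩ := hG.exists_walk_length_eq_dist u v
  cases p with
  | nil => simp at hp; simp [SimpleGraph.dist_self] at h
  | @cons _ w _ hadj q =>
    refine ⟨w, hadj, ?_⟩
    have h1 : G.dist w v ≤ q.length := SimpleGraph.dist_le q
    have h2 : G.dist u v ≤ G.dist u w + G.dist w v := hG.dist_triangle
    have h3 : G.dist u w ≤ 1 := by
      simpa using SimpleGraph.dist_le (SimpleGraph.Walk.cons hadj SimpleGraph.Walk.nil)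
    simp only [SimpleGraph.Walk.length_cons] at hp
    omega

lemma backbone_nonempty {B : Set V} (hB : IsBackbone G B) : ∃ b, b ∈ B := by
  obtain ⟨W, _, H, n, hH, hn, -, ⟨iso⟩⟩ := hB.1
  have : Nonempty W := hH.1.nonempty
  obtain ⟨w⟩ := this
  exact ⟨(iso.toEquiv.symm ⟨(w, 0), hn w⟩).1, (iso.toEquiv.symm ⟨(w, 0), hn w⟩).2⟩

lemma backbone_near (hG : G.Connected) {B : Set V} (hB : IsBackbone G B) (u : V) :
    ∃ b ∈ B, G.dist b u ≤ 1 := by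
  obtain ⟨b0, hb0⟩ := backbone_nonempty G hB
  suffices h : ∀ n : ℕ, ∀ b ∈ B, G.dist b u ≤ n → ∃ b' ∈ B, G.dist b' u ≤ 1 from
    h (G.dist b0 u) b0 hb0 le_rfl
  intro n
  induction n with
  | zero => exact fun b hb hd => ⟨b, hb, by omega⟩
  | succ n ih =>
    intro b hb hd
    by_cases h1 : G.dist b u ≤ 1
    · exact ⟨b, hb, h1⟩
    · obtain ⟨c', ⟨hcs, hcB⟩, -⟩ := hB.2 b hb u (by omega)
      exact ih c' hcB (by have := hcs.2; omega)

lemma mem_cNbr_self {v : V} : v ∈ cNbr G v := Set.mem_insert _ _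

lemma mem_cNbr_of_adj {v w : V} (h : G.Adj v w) : w ∈ cNbr G v :=
  Set.mem_insert_iff.mpr (Or.inr h)

lemma eq_or_adj_of_mem_cNbr {v w : V} (h : w ∈ cNbr G v) : w = v ∨ G.Adj v w := by
  rcases Set.mem_insert_iff.mp h with h | h
  · exact Or.inl h
  · exact Or.inr h

/-- The key finishing step: `p ∈ B` adjacent to both `u` and some `w1 ∈ N(u,v)`. -/
lemma claimA_finish (hG : G.Connected) {B : Set V} (hB : IsBackbone G B)
    {u v p w1 : V} (hpB : p ∈ B) (hpu : G.Adj p u) (hpw : G.Adj p w1)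
    (hw1 : w1 ∈ stepSet G u v) (hd : 2 ≤ G.dist u v) :
    ∃ w ∈ stepSet G u v, w ∈ B := by
  have hw1d : G.dist u v = 1 + G.dist w1 v := hw1.2
  have h1 : G.dist u v ≤ G.dist u p + G.dist p v := hG.dist_triangle
  have hup : G.dist u p ≤ 1 := by
    simpa using SimpleGraph.dist_le (SimpleGraph.Walk.cons hpu.symm SimpleGraph.Walk.nil)
  have h2 : G.dist p v ≤ G.dist p w1 + G.dist w1 v := hG.dist_triangle
  have hpw1 : G.dist p w1 ≤ 1 := by
    simpa using SimpleGraph.dist_le (SimpleGraph.Walk.cons hpw SimpleGraph.Walk.nil)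
  by_cases hc : G.dist u v = 1 + G.dist p v
  · exact ⟨p, ⟨hpu.symm, hc⟩, hpB⟩
  · have hpd : G.dist p v = G.dist u v := by omega
    obtain ⟨q, ⟨hqs, hqB⟩, hdom⟩ := hB.2 p hpB v (by omega)
    have hw1step : w1 ∈ stepSet G p v := ⟨hpw, by omega⟩
    have hu : u ∈ cNbr G q := hdom w1 hw1step (mem_cNbr_of_adj G hw1.1.symm)
    have hqd : G.dist p v = 1 + G.dist q v := hqs.2
    rcases eq_or_adj_of_mem_cNbr G hu with h | h
    · exact absurd hpd (by rw [h] at *; omega)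
    · exact ⟨q, ⟨h.symm, by omega⟩, hqB⟩

lemma claimA (hG : G.Connected) {B : Set V} (hB : IsBackbone G B)
    {u v : V} (hd : 2 ≤ G.dist u v) : ∃ w ∈ stepSet G u v, w ∈ B := by
  have huB : u ∈ B → ∃ w ∈ stepSet G u v, w ∈ B := by
    intro hu
    obtain ⟨c', ⟨hcs, hcB⟩, -⟩ := hB.2 u hu v hd
    exact ⟨c', hcs, hcB⟩
  obtain ⟨b, hbB, hb1⟩ := backbone_near G hG hB u
  obtain ⟨w1, hw1⟩ := exists_mem_stepSet G hG (by omega : 1 ≤ G.dist u v)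
  by_cases hbu : G.dist b u = 0
  · exact huB (by rwa [hG.dist_eq_zero_iff.mp hbu] at hbB)
  · have hbu1 : G.Adj b u := SimpleGraph.dist_eq_one_iff_adj.mp (by omega)
    have huw1 : G.dist u w1 = 1 := SimpleGraph.dist_eq_one_iff_adj.mpr hw1.1
    have hbw1 : G.dist b w1 ≤ 2 := by
      have := hG.dist_triangle (u := b) (v := u) (w := w1); omega
    rcases Nat.lt_or_ge (G.dist b w1) 2 with hlt | hge
    · by_cases h0 : G.dist b w1 = 0
      · exact ⟨w1, hw1, by rwa [hG.dist_eq_zero_iff.mp h0] at hbB⟩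
      · exact claimA_finish G hG hB hbB hbu1
          (SimpleGraph.dist_eq_one_iff_adj.mp (by omega)) hw1 hd
    · have hbw2 : G.dist b w1 = 2 := le_antisymm hbw1 hge
      obtain ⟨p, ⟨hps, hpB⟩, hdom⟩ := hB.2 b hbB w1 hge
      have hustep : u ∈ stepSet G b w1 := ⟨hbu1, by omega⟩
      have hu : u ∈ cNbr G p := hdom u hustep (mem_cNbr_self G)
      have hpw : G.Adj p w1 := by
        have := hps.2
        exact SimpleGraph.dist_eq_one_iff_adj.mp (by omega)
      rcases eq_or_adj_of_mem_cNbr G hu with h | h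
      · exact huB (h ▸ hpB)
      · exact claimA_finish G hG hB hpB h hpw hw1 hd

lemma claimB (hG : G.Connected) {B : Set V} (hB : IsBackbone G B) :
    ∀ n : ℕ, ∀ c ∈ B, ∀ x : V, G.dist c x = n →
      ∃ p : G.Walk c x, p.length = n ∧ ∀ w ∈ p.support, w ∈ B ∨ w = x := by
  intro n
  induction n using Nat.strong_induction_on with
  | _ n ih =>
    intro c hc x hd
    match n, hd with
    | 0, hd =>
      have : c = x := hG.dist_eq_zero_iff.mp hd
      subst this
      exact ⟨SimpleGraph.Walk.nil, by simp, by simp [hc]⟩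
    | 1, hd =>
      have hadj : G.Adj c x := SimpleGraph.dist_eq_one_iff_adj.mp hd
      refine ⟨SimpleGraph.Walk.cons hadj SimpleGraph.Walk.nil, by simp, ?_⟩
      intro w hw
      simp only [SimpleGraph.Walk.support_cons, SimpleGraph.Walk.support_nil,
        List.mem_cons, List.mem_singleton] at hw
      rcases hw with h | h | h
      · exact Or.inl (h ▸ hc)
      · exact Or.inr h
      · simp at h
    | (m+2), hd =>
      obtain ⟨c', ⟨hcs, hcB⟩, -⟩ := hB.2 c hc x (by omega)
      have hcd : G.dist c' x = m + 1 := by have := hcs.2; omega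
      obtain ⟨q, hql, hqsup⟩ := ih (m+1) (by omega) c' hcB x hcd
      refine ⟨SimpleGraph.Walk.cons hcs.1 q, by simp [hql], ?_⟩
      intro w hw
      simp only [SimpleGraph.Walk.support_cons, List.mem_cons] at hw
      rcases hw with h | h
      · exact Or.inl (h ▸ hc)
      · exact hqsup w h

end Aux

/-- In a vertebrate graph with backbone `B`, any two vertices at distance
at least 2 are joined by a shortest path all of whose internal vertices lie in `B`. -/
theorem exists_shortest_path_internal_in_backbone {V : Type} [Fintype V]
    (G : SimpleGraph V) (hG : G.Connected) (B : Set V) (hB : IsBackbone G B) :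
    ∀ u v : V, 2 ≤ G.dist u v →
      ∃ p : G.Walk u v, p.length = G.dist u v ∧
        ∀ w ∈ p.support, w = u ∨ w = v ∨ w ∈ B := by
  intro u v hd
  obtain ⟨w, hws, hwB⟩ := claimA G hG hB hd
  have hwd : G.dist u v = 1 + G.dist w v := hws.2
  obtain ⟨q, hql, hqsup⟩ := claimB G hG hB (G.dist w v) w hwB v rfl
  refine ⟨SimpleGraph.Walk.cons hws.1 q, by simp [hql]; omega, ?_⟩
  intro z hz
  simp only [SimpleGraph.Walk.support_cons, List.mem_cons] at hz
  rcases hz with h | h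
  · exact Or.inl h
  · rcases hqsup z h with h' | h'
    · exact Or.inr (Or.inr h')
    · exact Or.inr (Or.inl h')
end

section
/- Let G be a finite connected simple graph satisfying property (P2), let D ≥ 2 be the diameter of G, and let u be a vertex of G having some vertex at distance D from it. Let C be the vertex set of a connected component of the subgraph of G induced by N_D(u) = {v ∈ V(G) : d(u,v) = D}, and let N(C) = {v ∈ V(G) : d(u,v) = D − 1 and v is adjacent to some vertex of C}. Then every two distinct vertices of C ∪ N(C) are adjacent in G, i.e., C ∪ N(C) induces a complete subgraph. -/
open SimpleGraph

/-- Under (P2), if `C` is a component of the subgraph induced by the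
vertices at maximal distance `D ≥ 2` from `u`, then `C ∪ N(C)` induces a complete
subgraph. -/
theorem comp_union_nbrs_complete {V : Type} [Fintype V] (G : SimpleGraph V)
    (hG : G.Connected) (hP2 : P2 G) (D : ℕ) (hD : 2 ≤ D)
    (hdle : ∀ v w : V, G.dist v w ≤ D) (u : V) (hu : ∃ w : V, G.dist u w = D)
    (C : Set V)
    (hC : ∃ w : {v : V // G.dist u v = D},
      C = Subtype.val ''
        ((G.induce {v : V | G.dist u v = D}).connectedComponentMk ⟨w.val, w.property⟩).supp) :
    ∀ a ∈ C ∪ {v : V | G.dist u v = D - 1 ∧ ∃ w ∈ C, G.Adj v w},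
      ∀ b ∈ C ∪ {v : V | G.dist u v = D - 1 ∧ ∃ w ∈ C, G.Adj v w},
        a ≠ b → G.Adj a b := by
  classical
  obtain ⟨w0, hCw⟩ := hC
  -- every element of C is at distance D from u
  have hCdist : ∀ a ∈ C, G.dist u a = D := by
    intro a ha
    rw [hCw] at ha
    obtain ⟨⟨a', ha'⟩, _, rfl⟩ := ha
    exact ha'
  -- Key lemma: common neighbors of a vertex at max distance from u are adjacent
  have hK : ∀ z a b : V, G.dist u z = D → G.Adj z a → G.Adj z b → a ≠ b → G.Adj a b := by
    intro z a b hz hza hzb hab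
    by_contra hnadj
    have hza1 : G.dist a z = 1 := dist_eq_one_iff_adj.mpr hza.symm
    have hzb1 : G.dist b z = 1 := dist_eq_one_iff_adj.mpr hzb.symm
    have hzb1' : G.dist z b = 1 := dist_eq_one_iff_adj.mpr hzb
    have hab2 : G.dist a b = 2 := by
      have hle : G.dist a b ≤ 2 := by
        have := hG.dist_triangle (u := a) (v := z) (w := b)
        omega
      have hpos : 0 < G.dist a b := hG.pos_dist_of_ne hab
      have hne1 : G.dist a b ≠ 1 := fun h => hnadj (dist_eq_one_iff_adj.mp h)
      omega
    have hzu : G.dist z u = D := by rw [SimpleGraph.dist_comm]; exact hz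
    have hstep : z ∈ stepSet G a b := ⟨hza.symm, by
      have : G.dist z b = 1 := dist_eq_one_iff_adj.mpr hzb
      omega⟩
    have h2u : 2 ≤ G.dist z u := by omega
    rcases hP2 a b (by omega) z hstep u h2u with h | h
    · have h1 : G.dist a u ≤ D := hdle a u
      rw [hza1, hzu] at h
      omega
    · have h1 : G.dist b u ≤ D := hdle b u
      rw [hzb1, hzu] at h
      omega
  -- vertices within C are equal or adjacent
  have hCC : ∀ a ∈ C, ∀ b ∈ C, a ≠ b → G.Adj a b := by
    have key : ∀ (x y : {v : V // G.dist u v = D})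
        (_ : (G.induce {v : V | G.dist u v = D}).Walk x y),
        x.val = y.val ∨ G.Adj x.val y.val := by
      intro x y p
      induction p with
      | nil => exact Or.inl rfl
      | cons hadj p ih =>
        rename_i x m y
        have hxm : G.Adj x.val m.val := hadj
        rcases ih with h | h
        · exact Or.inr (h ▸ hxm)
        · by_cases hxy : x.val = y.val
          · exact Or.inl hxy
          · exact Or.inr (hK m.val x.val y.val m.property hxm.symm h hxy)
    intro a ha b hb hab
    rw [hCw] at ha hb
    obtain ⟨pa, hpa, rfl⟩ := ha
    obtain ⟨pb, hpb, rfl⟩ := hb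
    rw [SimpleGraph.ConnectedComponent.mem_supp_iff] at hpa hpb
    obtain ⟨p⟩ := SimpleGraph.ConnectedComponent.exact (hpa.trans hpb.symm)
    rcases key pa pb p with h | h
    · exact absurd h hab
    · exact h
  -- main proof
  intro a ha b hb hab
  rcases ha with ha | ⟨had, wa, hwa, hawa⟩
  · rcases hb with hb | ⟨hbd, wb, hwb, hbwb⟩
    · exact hCC a ha b hb hab
    · -- a ∈ C, b ∈ N(C)
      by_cases hwa : wb = a
      · subst hwa; exact hbwb.symm
      · have h1 : G.Adj wb a := hCC wb hwb a ha hwa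
        exact (hK wb b a (hCdist wb hwb) hbwb.symm h1 (Ne.symm hab)).symm
  · rcases hb with hb | ⟨hbd, wb, hwb, hbwb⟩
    · -- a ∈ N(C), b ∈ C
      by_cases hwb : wa = b
      · subst hwb; exact hawa
      · have h1 : G.Adj wa b := hCC wa hwa b hb hwb
        exact hK wa a b (hCdist wa hwa) hawa.symm h1 hab
    · -- a, b ∈ N(C)
      have hane : a ≠ wb := by
        intro h; rw [h] at had
        have := hCdist wb hwb
        omega
      have h1 : G.Adj a wb := by
        by_cases hww : wa = wb
        · rw [← hww]; exact hawa
        · have h2 : G.Adj wa wb := hCC wa hwa wb hwb hww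
          exact hK wa a wb (hCdist wa hwa) hawa.symm h2 hane
      exact hK wb a b (hCdist wb hwb) h1.symm hbwb.symm hab
end

section
/- Let G be a finite connected simple graph and H a connected induced subgraph of G that is isometric in G. Suppose H (with its own graph distance, which agrees with that of G on V(H)) satisfies property (P3) with witness S ⊆ V(H). For c ∈ V(H) and r ∈ V(G) define f(c,r) = min over x ∈ V(H) of (d_G(r,x) − d_G(c,x)). Then for every c ∈ S and r ∈ V(G) with f(c,r) < 0, and every r' ∈ V(G) with r' = r or r' adjacent to r in G, at least one of the following holds: (i) r' ∈ N_G[c]; or (ii) there exists c' ∈ S with c' = c or c' adjacent to c in G, such that f(c',r') ≥ f(c,r). -/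
open SimpleGraph

/-- guarding an isometric induced subgraph satisfying (P3): the cop can
keep the potential `f` from decreasing, unless the robber steps next to the cop. -/
theorem cop_maintains_potential {V : Type} [Fintype V] (G : SimpleGraph V)
    (hG : G.Connected) (B : Set V) (hBconn : (G.induce B).Connected)
    (hiso : ∀ u v : B, (G.induce B).dist u v = G.dist u.val v.val)
    (S : Set ↥B) (hS : P3Witness (G.induce B) S)
    (f : ↥B → V → ℤ)
    (hf : ∀ (c : ↥B) (r : V),
      f c r = sInf {z : ℤ | ∃ x ∈ B, z = (G.dist r x : ℤ) - (G.dist c.val x : ℤ)}) :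
    ∀ c ∈ S, ∀ r : V, f c r < 0 → ∀ r' : V, (r' = r ∨ G.Adj r r') →
      r' ∈ cNbr G c.val ∨
      ∃ c' ∈ S, (c'.val = c.val ∨ G.Adj c.val c'.val) ∧ f c r ≤ f c' r' := by
  intro c hc r hm r' hr'
  right
  have hfin : ∀ (c : ↥B) (r : V),
      {z : ℤ | ∃ x ∈ B, z = (G.dist r x : ℤ) - (G.dist c.val x : ℤ)}.Finite := by
    intro c r
    have heq : {z : ℤ | ∃ x ∈ B, z = (G.dist r x : ℤ) - (G.dist c.val x : ℤ)}
        = (fun x => (G.dist r x : ℤ) - (G.dist c.val x : ℤ)) '' B := by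
      ext z; simp [eq_comm]
    rw [heq]
    exact (Set.toFinite B).image _
  have hne : ∀ (c : ↥B) (r : V),
      {z : ℤ | ∃ x ∈ B, z = (G.dist r x : ℤ) - (G.dist c.val x : ℤ)}.Nonempty :=
    fun c r => ⟨_, c.val, c.2, rfl⟩
  have hle : ∀ (c : ↥B) (r : V), ∀ y ∈ B,
      f c r ≤ (G.dist r y : ℤ) - (G.dist c.val y : ℤ) := by
    intro c r y hy
    rw [hf]
    exact csInf_le (hfin c r).bddBelow ⟨y, hy, rfl⟩
  have hmem : ∀ (c : ↥B) (r : V), ∃ x ∈ B,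
      f c r = (G.dist r x : ℤ) - (G.dist c.val x : ℤ) := by
    intro c r
    rw [hf]
    exact (hne c r).csInf_mem (hfin c r)
  by_cases hcase : f c r ≤ f c r'
  · exact ⟨c, hc, Or.inl rfl, hcase⟩
  push_neg at hcase
  obtain ⟨x, hxB, hx⟩ := hmem c r'
  have hxr' : (G.dist r' x : ℤ) - (G.dist c.val x : ℤ) ≤ f c r - 1 := by omega
  have hd2 : 2 ≤ G.dist c.val x := by omega
  have hd2' : 2 ≤ (G.induce B).dist c ⟨x, hxB⟩ := by rw [hiso]; exact hd2
  obtain ⟨c', hc'mem, hprop⟩ := hS.2 c hc ⟨x, hxB⟩ hd2'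
  obtain ⟨⟨hadj, hdist⟩, hc'S⟩ := hc'mem
  have hadjG : G.Adj c.val c'.val := hadj
  have hdistG : G.dist c.val x = 1 + G.dist c'.val x := by
    rw [hiso, hiso] at hdist; exact hdist
  have hcc' : G.dist c.val c'.val = 1 := SimpleGraph.dist_eq_one_iff_adj.mpr hadjG
  refine ⟨c', hc'S, Or.inr hadjG, ?_⟩
  rw [hf c' r']
  apply le_csInf (hne c' r')
  rintro z ⟨y, hy, rfl⟩
  have hry' : (G.dist r y : ℤ) ≤ 1 + G.dist r' y := by
    rcases hr' with rfl | hadjr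
    · omega
    · have htr := hG.dist_triangle (u := r) (v := r') (w := y)
      have h1 : G.dist r r' = 1 := SimpleGraph.dist_eq_one_iff_adj.mpr hadjr
      omega
  by_cases h2 : 2 ≤ (G.induce B).dist c' ⟨y, hy⟩
  · rcases hprop ⟨y, hy⟩ h2 with h | h
    · have h' : G.dist c.val y = G.dist c.val c'.val + G.dist c'.val y := by
        simp only [hiso] at h; exact h
      have hy1 := hle c r y hy
      omega
    · have h' : G.dist x y = G.dist x c'.val + G.dist c'.val y := by
        simp only [hiso] at h; exact h
      have htr : G.dist x y ≤ G.dist x r' + G.dist r' y := hG.dist_triangle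
      have hsymm : G.dist x r' = G.dist r' x := SimpleGraph.dist_comm
      have hsymm2 : G.dist x c'.val = G.dist c'.val x := SimpleGraph.dist_comm
      omega
  · push_neg at h2
    have h2' : G.dist c'.val y < 2 := by rw [hiso] at h2; exact h2
    have : (0:ℤ) ≤ G.dist r' y := by positivity
    omega
end
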